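/- Suppose n > 1000, ℓ, m ≥ 1, d1 ∈ {1,…,9}, d2 ∈ {0,…,9}, d1 ≠ d2, and 9(α^n + β^n) = d1·10^{2ℓ+m} − (d1−d2)·10^{ℓ+m} + (d1−d2)·10^ℓ − d1. Then |9α^n − (d1·10^{ℓ+m} − (d1−d2)·10^m + (d1−d2))·10^ℓ| < 10, and consequently |((d1·10^{ℓ+m} − (d1−d2)·10^m + (d1−d2))/9)·α^{−n}·10^ℓ − 1| < 10/(9α^n). -/

import Mathlib

noncomputable def α : ℝ := (1 + Real.sqrt 5) / 2
noncomputable def β : ℝ := (1 - Real.sqrt 5) / 2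

lemma sqrt5_lt : Real.sqrt 5 < 2.24 := by
  rw [show (2.24:ℝ) = Real.sqrt (2.24^2) by rw [Real.sqrt_sq]; norm_num]
  exact Real.sqrt_lt_sqrt (by norm_num) (by norm_num)

lemma sqrt5_gt : (2:ℝ) < Real.sqrt 5 := by
  rw [show (2:ℝ) = Real.sqrt 4 by rw [show (4:ℝ) = 2^2 by norm_num, Real.sqrt_sq]; norm_num]
  exact Real.sqrt_lt_sqrt (by norm_num) (by norm_num)

lemma alpha_pos : 0 < α := by
  unfold α; have := sqrt5_gt; linarith

lemma abs_beta_lt : |β| < 0.62 := by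
  unfold β
  rw [abs_lt]
  constructor <;> [skip; skip] <;> nlinarith [sqrt5_lt, sqrt5_gt]

theorem key_estimate_three (n ℓ m : ℕ) (d1 d2 : ℤ)
    (hn : 1000 < n) (hℓ : 1 ≤ ℓ) (hm : 1 ≤ m)
    (hd1 : 1 ≤ d1) (hd1' : d1 ≤ 9) (hd2 : 0 ≤ d2) (hd2' : d2 ≤ 9)
    (hne : d1 ≠ d2)
    (heq : 9 * (α ^ n + β ^ n) =
      (d1 : ℝ) * 10 ^ (2 * ℓ + m) - (d1 - d2 : ℝ) * 10 ^ (ℓ + m)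
        + (d1 - d2 : ℝ) * 10 ^ ℓ - d1) :
    |9 * α ^ n - ((d1 : ℝ) * 10 ^ (ℓ + m) - (d1 - d2 : ℝ) * 10 ^ m
        + (d1 - d2 : ℝ)) * 10 ^ ℓ| < 10 ∧
    |(((d1 : ℝ) * 10 ^ (ℓ + m) - (d1 - d2 : ℝ) * 10 ^ m + (d1 - d2 : ℝ)) / 9)
        * α ^ (-(n : ℤ)) * 10 ^ ℓ - 1| < 10 / (9 * α ^ n) := by
  have hd1R : (1:ℝ) ≤ (d1:ℝ) := by exact_mod_cast hd1
  have hd1R' : (d1:ℝ) ≤ 9 := by exact_mod_cast hd1'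
  -- rewrite the equation
  have hkey : 9 * α ^ n - ((d1 : ℝ) * 10 ^ (ℓ + m) - (d1 - d2 : ℝ) * 10 ^ m
      + (d1 - d2 : ℝ)) * 10 ^ ℓ = -(9 * β ^ n) - d1 := by
    have e1 : (10:ℝ) ^ (2*ℓ+m) = 10 ^ (ℓ+m) * 10 ^ ℓ := by
      rw [← pow_add]; ring_nf
    have e2 : (10:ℝ) ^ (ℓ+m) = 10 ^ m * 10 ^ ℓ := by
      rw [← pow_add]; ring_nf
    linear_combination heq
  -- bound on |β|^n
  have hb0 : (0:ℝ) ≤ |β| := abs_nonneg _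
  have hb1 : |β| ≤ 1 := le_of_lt (lt_trans abs_beta_lt (by norm_num))
  have hbn : |β| ^ n ≤ |β| ^ 5 := pow_le_pow_of_le_one hb0 hb1 (by omega)
  have hb5 : |β| ^ 5 < (0.62:ℝ)^5 := by
    apply pow_lt_pow_left₀ abs_beta_lt hb0 (by norm_num)
  have hbeta : 9 * |β ^ n| < 1 := by
    rw [abs_pow]
    nlinarith
  have habs : |9 * α ^ n - ((d1 : ℝ) * 10 ^ (ℓ + m) - (d1 - d2 : ℝ) * 10 ^ m
      + (d1 - d2 : ℝ)) * 10 ^ ℓ| < 10 := by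
    rw [hkey]
    have := abs_abs (β ^ n)
    have h1 : |(-(9 * β ^ n) - (d1:ℝ))| ≤ 9 * |β ^ n| + |(d1:ℝ)| := by
      calc |(-(9 * β ^ n) - (d1:ℝ))| ≤ |(-(9 * β ^ n))| + |(d1:ℝ)| := abs_sub _ _
        _ = 9 * |β ^ n| + |(d1:ℝ)| := by rw [abs_neg, abs_mul]; norm_num
    have h2 : |(d1:ℝ)| ≤ 9 := by rw [abs_of_nonneg (by linarith)]; linarith
    linarith
  refine ⟨habs, ?_⟩
  have hαpos : (0:ℝ) < α ^ n := pow_pos alpha_pos n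
  have hzpow : α ^ (-(n:ℤ)) = (α ^ n)⁻¹ := by
    rw [zpow_neg, zpow_natCast]
  rw [hzpow]
  have hrw : (((d1 : ℝ) * 10 ^ (ℓ + m) - (d1 - d2 : ℝ) * 10 ^ m + (d1 - d2 : ℝ)) / 9)
        * (α ^ n)⁻¹ * 10 ^ ℓ - 1
      = -((9 * α ^ n - ((d1 : ℝ) * 10 ^ (ℓ + m) - (d1 - d2 : ℝ) * 10 ^ m
        + (d1 - d2 : ℝ)) * 10 ^ ℓ)) / (9 * α ^ n) := by
    field_simp
    ring
  have h9 : (0:ℝ) < 9 * α ^ n := by linarith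
  rw [hrw, abs_div, abs_neg, abs_of_pos h9]
  exact (div_lt_div_iff_of_pos_right h9).mpr habs
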